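/- Let A ∈ M_{n×n}(ℝ), A_□ = [[0, I_n], [A, 0]] ∈ M_{2n×2n}(ℝ), and b ∈ ℝⁿ. Let P_□(b) be the Brunovsky change-of-basis matrix for (A_□, [0; b]ᵀ) and P_A(b) the Brunovsky change-of-basis matrix for (A, b). Then P_□(b) P_□(b)ᵀ = [[P_A(b) P_A(b)ᵀ, 0], [0, P_A(b) P_A(b)ᵀ]]. Consequently, the smallest eigenvalue of P_□(b) P_□(b)ᵀ equals the smallest eigenvalue of P_A(b) P_A(b)ᵀ. -/

import Mathlib

open Matrix Finset

/-- p_k(M) = M^(N-k) + Σ_{j=1}^{N-k} a_j M^(N-k-j), where a_j is the coefficient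
of x^(N-j) in the characteristic polynomial of the N×N matrix M (p_N(M) = I). -/
noncomputable def pkG {m : Type} [Fintype m] [DecidableEq m] (N : ℕ)
    (M : Matrix m m ℝ) (k : ℕ) : Matrix m m ℝ :=
  M ^ (N - k) + ∑ j ∈ Finset.Icc 1 (N - k), M.charpoly.coeff (N - j) • M ^ (N - k - j)

/-- The Brunovsky change-of-basis matrix for (A, b): columns p_k(A) b. -/
noncomputable def PA (n : ℕ) (A : Matrix (Fin n) (Fin n) ℝ) (b : Fin n → ℝ) :
    Matrix (Fin n) (Fin n) ℝ :=
  Matrix.of fun r c => ((pkG n A ((c : ℕ) + 1)).mulVec b) r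

/-- The Brunovsky change-of-basis matrix for (A_□, (0, b)). -/
noncomputable def Psq (n : ℕ) (A : Matrix (Fin n) (Fin n) ℝ) (b : Fin n → ℝ) :
    Matrix (Fin n ⊕ Fin n) (Fin (2 * n)) ℝ :=
  Matrix.of fun r c =>
    ((pkG (2 * n) (Matrix.fromBlocks 0 1 A 0 : Matrix (Fin n ⊕ Fin n) (Fin n ⊕ Fin n) ℝ)
        ((c : ℕ) + 1)).mulVec (Sum.elim 0 b)) r

lemma eval_charpoly_eq {m : Type} [Fintype m] [DecidableEq m] (M : Matrix m m ℝ) (x : ℝ) :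
    Polynomial.eval x M.charpoly = Matrix.det (x • (1 : Matrix m m ℝ) - M) := by
  rw [Matrix.charpoly, ← Polynomial.coe_evalRingHom, RingHom.map_det]
  congr 1
  ext i j
  simp [Matrix.charmatrix_apply, Matrix.map_apply, Matrix.sub_apply, Matrix.diagonal_apply,
    Matrix.one_apply, Matrix.smul_apply]
  split <;> simp

lemma charpoly_S (n : ℕ) (A : Matrix (Fin n) (Fin n) ℝ) :
    (Matrix.fromBlocks 0 1 A 0 : Matrix (Fin n ⊕ Fin n) (Fin n ⊕ Fin n) ℝ).charpoly
      = Polynomial.expand ℝ 2 A.charpoly := by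
  apply Polynomial.eq_of_infinite_eval_eq
  apply Set.Infinite.mono (s := {x : ℝ | x ≠ 0})
  · intro x hx
    have hx : (x : ℝ) ≠ 0 := hx
    simp only [Set.mem_setOf_eq, Polynomial.expand_eq_comp_X_pow, Polynomial.eval_comp,
      Polynomial.eval_pow, Polynomial.eval_X, eval_charpoly_eq]
    have hinv : Invertible (x • (1 : Matrix (Fin n) (Fin n) ℝ)) :=
      ⟨x⁻¹ • 1, by rw [smul_mul_smul_comm]; simp [inv_mul_cancel₀ hx],
        by rw [smul_mul_smul_comm]; simp [mul_inv_cancel₀ hx]⟩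
    have hblock : x • (1 : Matrix (Fin n ⊕ Fin n) (Fin n ⊕ Fin n) ℝ)
        - Matrix.fromBlocks 0 1 A 0
        = Matrix.fromBlocks (x • 1) (-1) (-A) (x • 1) := by
      rw [← Matrix.fromBlocks_one, Matrix.fromBlocks_smul, sub_eq_add_neg,
        Matrix.fromBlocks_neg, Matrix.fromBlocks_add]
      simp
    rw [hblock, Matrix.det_fromBlocks₂₂]
    have hinverse : (⅟ (x • (1 : Matrix (Fin n) (Fin n) ℝ))) = x⁻¹ • 1 :=
      invOf_eq_right_inv (by rw [smul_mul_smul_comm]; simp [mul_inv_cancel₀ hx])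
    rw [hinverse]
    have h2 : (x • (1 : Matrix (Fin n) (Fin n) ℝ) - -1 * (x⁻¹ • 1) * -A)
        = x⁻¹ • (x ^ 2 • (1 : Matrix (Fin n) (Fin n) ℝ) - A) := by
      rw [smul_sub, smul_smul]
      field_simp
      ring_nf
      congr 1
      rw [neg_one_mul, neg_mul_neg, Matrix.smul_mul, Matrix.one_mul]
    rw [h2, Matrix.det_smul, Matrix.det_smul, ← mul_assoc]
    rw [Matrix.det_one, mul_one, ← mul_pow, mul_inv_cancel₀ hx, one_pow, one_mul]
  · have : ({x : ℝ | x ≠ 0}) = {(0:ℝ)}ᶜ := rfl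
    rw [this]
    exact Set.Finite.infinite_compl (Set.finite_singleton 0)

lemma Spow_even (n m : ℕ) (A : Matrix (Fin n) (Fin n) ℝ) :
    (Matrix.fromBlocks 0 1 A 0 : Matrix (Fin n ⊕ Fin n) (Fin n ⊕ Fin n) ℝ) ^ (2 * m)
      = Matrix.fromBlocks (A ^ m) 0 0 (A ^ m) := by
  induction m with
  | zero => simp [Matrix.fromBlocks_one]
  | succ m ih =>
    have : 2 * (m + 1) = 2 * m + 1 + 1 := by ring
    rw [this, pow_succ, pow_succ, ih, Matrix.fromBlocks_multiply, Matrix.fromBlocks_multiply]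
    simp [pow_succ]

lemma Spow_odd (n m : ℕ) (A : Matrix (Fin n) (Fin n) ℝ) :
    (Matrix.fromBlocks 0 1 A 0 : Matrix (Fin n ⊕ Fin n) (Fin n ⊕ Fin n) ℝ) ^ (2 * m + 1)
      = Matrix.fromBlocks 0 (A ^ m) (A ^ (m + 1)) 0 := by
  rw [pow_succ, Spow_even, Matrix.fromBlocks_multiply]
  simp [pow_succ]

lemma sum_parity {M : Type*} [AddCommMonoid M] (N : ℕ) (f : ℕ → M)
    (h : ∀ j ≤ N, j % 2 = 1 → f j = 0) :
    ∑ j ∈ Finset.Icc 1 N, f j = ∑ i ∈ Finset.Icc 1 (N / 2), f (2 * i) := by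
  rw [← Finset.sum_filter_add_sum_filter_not (Finset.Icc 1 N) (fun j => j % 2 = 0)]
  have h2 : ∑ j ∈ (Finset.Icc 1 N).filter (fun j => ¬ j % 2 = 0), f j = 0 :=
    Finset.sum_eq_zero fun j hj => by
      have h1 := Finset.mem_filter.1 hj
      have h3 := Finset.mem_Icc.1 h1.1
      exact h j h3.2 (by have := h1.2; omega)
  rw [h2, add_zero]
  have h3 : (Finset.Icc 1 N).filter (fun j => j % 2 = 0)
      = (Finset.Icc 1 (N / 2)).image (fun i => 2 * i) := by
    ext a
    simp only [Finset.mem_filter, Finset.mem_Icc, Finset.mem_image]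
    constructor
    · intro ⟨⟨h1, h2⟩, h3⟩; exact ⟨a / 2, by omega, by omega⟩
    · rintro ⟨i, ⟨h1, h2⟩, rfl⟩; omega
  rw [h3, Finset.sum_image (fun a _ b _ hab => by omega)]

lemma fromBlocks_sum_diag {ι : Type*} (s : Finset ι) {p q : Type*}
    (f : ι → Matrix p p ℝ) (g : ι → Matrix q q ℝ) :
    ∑ i ∈ s, Matrix.fromBlocks (f i) 0 0 (g i)
      = Matrix.fromBlocks (∑ i ∈ s, f i) 0 0 (∑ i ∈ s, g i) := by
  induction s using Finset.cons_induction with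
  | empty => simp [Matrix.fromBlocks_zero]
  | cons a s ha ih =>
    rw [Finset.sum_cons, Finset.sum_cons, Finset.sum_cons, ih, Matrix.fromBlocks_add]
    simp

lemma fromBlocks_sum_anti {ι : Type*} (s : Finset ι) {p q : Type*}
    (f : ι → Matrix p q ℝ) (g : ι → Matrix q p ℝ) :
    ∑ i ∈ s, Matrix.fromBlocks 0 (f i) (g i) 0
      = Matrix.fromBlocks 0 (∑ i ∈ s, f i) (∑ i ∈ s, g i) 0 := by
  induction s using Finset.cons_induction with
  | empty => simp [Matrix.fromBlocks_zero]
  | cons a s ha ih =>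
    rw [Finset.sum_cons, Finset.sum_cons, Finset.sum_cons, ih, Matrix.fromBlocks_add]
    simp

lemma pkG_even (n t : ℕ) (ht : t ≤ n) (A : Matrix (Fin n) (Fin n) ℝ) :
    pkG (2 * n) (Matrix.fromBlocks 0 1 A 0 : Matrix (Fin n ⊕ Fin n) (Fin n ⊕ Fin n) ℝ) (2 * t)
      = Matrix.fromBlocks (pkG n A t) 0 0 (pkG n A t) := by
  unfold pkG
  rw [charpoly_S]
  have e1 : 2 * n - 2 * t = 2 * (n - t) := by omega
  rw [e1]
  rw [sum_parity (2 * (n - t)) _ (fun j hj hodd => by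
    rw [Polynomial.coeff_expand (by norm_num), if_neg (by omega), zero_smul])]
  have e2 : 2 * (n - t) / 2 = n - t := by omega
  rw [e2, Spow_even]
  have e3 : ∀ i ∈ Finset.Icc 1 (n - t),
      (Polynomial.expand ℝ 2 A.charpoly).coeff (2 * n - 2 * i)
          • (Matrix.fromBlocks 0 1 A 0 : Matrix (Fin n ⊕ Fin n) (Fin n ⊕ Fin n) ℝ)
            ^ (2 * (n - t) - 2 * i)
        = Matrix.fromBlocks (A.charpoly.coeff (n - i) • A ^ (n - t - i)) 0 0
            (A.charpoly.coeff (n - i) • A ^ (n - t - i)) := by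
    intro i hi
    rw [Finset.mem_Icc] at hi
    have e4 : 2 * n - 2 * i = 2 * (n - i) := by omega
    have e5 : 2 * (n - t) - 2 * i = 2 * (n - t - i) := by omega
    rw [e4, e5, Polynomial.coeff_expand_mul' (by norm_num), Spow_even,
      Matrix.fromBlocks_smul]
    simp
  rw [Finset.sum_congr rfl e3, fromBlocks_sum_diag, Matrix.fromBlocks_add]
  simp

lemma pkG_odd (n t : ℕ) (ht : t < n) (A : Matrix (Fin n) (Fin n) ℝ) :
    pkG (2 * n) (Matrix.fromBlocks 0 1 A 0 : Matrix (Fin n ⊕ Fin n) (Fin n ⊕ Fin n) ℝ)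
        (2 * t + 1)
      = Matrix.fromBlocks 0 (pkG n A (t + 1))
          (A ^ (n - t) + ∑ i ∈ Finset.Icc 1 (n - t - 1),
            A.charpoly.coeff (n - i) • A ^ (n - t - i)) 0 := by
  unfold pkG
  rw [charpoly_S]
  have e1 : 2 * n - (2 * t + 1) = 2 * (n - t - 1) + 1 := by omega
  rw [e1]
  rw [sum_parity (2 * (n - t - 1) + 1) _ (fun j hj hodd => by
    rw [Polynomial.coeff_expand (by norm_num), if_neg (by omega), zero_smul])]
  have e2 : (2 * (n - t - 1) + 1) / 2 = n - t - 1 := by omega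
  rw [e2, Spow_odd]
  have e3 : ∀ i ∈ Finset.Icc 1 (n - t - 1),
      (Polynomial.expand ℝ 2 A.charpoly).coeff (2 * n - 2 * i)
          • (Matrix.fromBlocks 0 1 A 0 : Matrix (Fin n ⊕ Fin n) (Fin n ⊕ Fin n) ℝ)
            ^ (2 * (n - t - 1) + 1 - 2 * i)
        = Matrix.fromBlocks 0 (A.charpoly.coeff (n - i) • A ^ (n - t - 1 - i))
            (A.charpoly.coeff (n - i) • A ^ (n - t - i)) 0 := by
    intro i hi
    rw [Finset.mem_Icc] at hi
    have e4 : 2 * n - 2 * i = 2 * (n - i) := by omega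
    have e5 : 2 * (n - t - 1) + 1 - 2 * i = 2 * (n - t - 1 - i) + 1 := by omega
    have e6 : n - t - 1 - i + 1 = n - t - i := by omega
    rw [e4, e5, Polynomial.coeff_expand_mul' (by norm_num), Spow_odd, e6,
      Matrix.fromBlocks_smul]
    simp
  rw [Finset.sum_congr rfl e3, fromBlocks_sum_anti, Matrix.fromBlocks_add]
  have e7 : n - t - 1 + 1 = n - t := by omega
  have e8 : n - (t + 1) = n - t - 1 := by omega
  rw [e7, e8]
  simp

lemma sum_range_pair {M : Type*} [AddCommMonoid M] (n : ℕ) (F : ℕ → M) :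
    ∑ c ∈ Finset.range (2 * n), F c = ∑ t ∈ Finset.range n, (F (2 * t) + F (2 * t + 1)) := by
  induction n with
  | zero => simp
  | succ n ih =>
    have : 2 * (n + 1) = 2 * n + 1 + 1 := by ring
    rw [this, Finset.sum_range_succ, Finset.sum_range_succ, ih, Finset.sum_range_succ]
    rw [add_assoc]

lemma col_even (n t : ℕ) (ht : t < n) (A : Matrix (Fin n) (Fin n) ℝ) (b : Fin n → ℝ) :
    (pkG (2 * n) (Matrix.fromBlocks 0 1 A 0 : Matrix (Fin n ⊕ Fin n) (Fin n ⊕ Fin n) ℝ)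
        (2 * t + 1)).mulVec (Sum.elim 0 b)
      = Sum.elim ((pkG n A (t + 1)).mulVec b) 0 := by
  rw [pkG_odd n t ht, Matrix.fromBlocks_mulVec]
  simp

lemma col_odd (n t : ℕ) (ht : t < n) (A : Matrix (Fin n) (Fin n) ℝ) (b : Fin n → ℝ) :
    (pkG (2 * n) (Matrix.fromBlocks 0 1 A 0 : Matrix (Fin n ⊕ Fin n) (Fin n ⊕ Fin n) ℝ)
        (2 * (t + 1))).mulVec (Sum.elim 0 b)
      = Sum.elim (0 : Fin n → ℝ) ((pkG n A (t + 1)).mulVec b) := by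
  rw [pkG_even n (t + 1) (by omega), Matrix.fromBlocks_mulVec]
  simp

lemma gram_eq (n : ℕ) (A : Matrix (Fin n) (Fin n) ℝ) (b : Fin n → ℝ) :
    Psq n A b * (Psq n A b)ᵀ
      = Matrix.fromBlocks (PA n A b * (PA n A b)ᵀ) 0 0 (PA n A b * (PA n A b)ᵀ) := by
  have key : ∀ r s : Fin n ⊕ Fin n,
      (Psq n A b * (Psq n A b)ᵀ) r s
        = ∑ t ∈ Finset.range n,
            (Sum.elim ((pkG n A (t + 1)).mulVec b) 0 r * Sum.elim ((pkG n A (t + 1)).mulVec b) 0 s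
            + Sum.elim (0 : Fin n → ℝ) ((pkG n A (t + 1)).mulVec b) r
              * Sum.elim (0 : Fin n → ℝ) ((pkG n A (t + 1)).mulVec b) s) := by
    intro r s
    rw [Matrix.mul_apply]
    simp only [Matrix.transpose_apply, Psq, Matrix.of_apply]
    rw [Fin.sum_univ_eq_sum_range (fun c =>
      ((pkG (2 * n) (Matrix.fromBlocks 0 1 A 0) (c + 1)).mulVec (Sum.elim 0 b)) r
        * ((pkG (2 * n) (Matrix.fromBlocks 0 1 A 0) (c + 1)).mulVec (Sum.elim 0 b)) s)]
    rw [sum_range_pair]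
    refine Finset.sum_congr rfl fun t htt => ?_
    rw [Finset.mem_range] at htt
    have h1 : 2 * t + 1 + 1 = 2 * (t + 1) := by ring
    rw [h1, col_even n t htt, col_odd n t htt]
  have key2 : ∀ r s : Fin n, (PA n A b * (PA n A b)ᵀ) r s
      = ∑ t ∈ Finset.range n, (pkG n A (t + 1)).mulVec b r * (pkG n A (t + 1)).mulVec b s := by
    intro r s
    rw [Matrix.mul_apply]
    simp only [Matrix.transpose_apply, PA, Matrix.of_apply]
    exact Fin.sum_univ_eq_sum_range
      (fun c => (pkG n A (c + 1)).mulVec b r * (pkG n A (c + 1)).mulVec b s) n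
  ext r s
  rw [key r s]
  cases r with
  | inl r =>
    cases s with
    | inl s => simp [Matrix.fromBlocks, key2]
    | inr s => simp [Matrix.fromBlocks]
  | inr r =>
    cases s with
    | inl s => simp [Matrix.fromBlocks]
    | inr s => simp [Matrix.fromBlocks, key2]

lemma spectrum_blocks {p : Type} [Fintype p] [DecidableEq p] (B : Matrix p p ℝ) :
    spectrum ℝ (Matrix.fromBlocks B 0 0 B : Matrix (p ⊕ p) (p ⊕ p) ℝ) = spectrum ℝ B := by
  ext μ
  rw [spectrum.mem_iff, spectrum.mem_iff]
  have h1 : algebraMap ℝ (Matrix (p ⊕ p) (p ⊕ p) ℝ) μ - Matrix.fromBlocks B 0 0 B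
      = Matrix.fromBlocks (algebraMap ℝ (Matrix p p ℝ) μ - B) 0 0
          (algebraMap ℝ (Matrix p p ℝ) μ - B) := by
    rw [Algebra.algebraMap_eq_smul_one, Algebra.algebraMap_eq_smul_one, ← Matrix.fromBlocks_one,
      Matrix.fromBlocks_smul, sub_eq_add_neg, Matrix.fromBlocks_neg, Matrix.fromBlocks_add]
    simp [sub_eq_add_neg]
  rw [h1, Matrix.isUnit_iff_isUnit_det, Matrix.det_fromBlocks_zero₁₂,
    Matrix.isUnit_iff_isUnit_det (algebraMap ℝ (Matrix p p ℝ) μ - B), IsUnit.mul_iff, and_self]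

/-- P_□(b) P_□(b)ᵀ = diag(P_A(b) P_A(b)ᵀ, P_A(b) P_A(b)ᵀ); consequently the
smallest eigenvalues of the two Gram matrices agree. -/
theorem wave_equals_heat (n : ℕ) (hn : 0 < n)
    (A : Matrix (Fin n) (Fin n) ℝ) (b : Fin n → ℝ)
    (h1 : (Psq n A b * (Psq n A b)ᵀ).IsHermitian)
    (h2 : (PA n A b * (PA n A b)ᵀ).IsHermitian) :
    Psq n A b * (Psq n A b)ᵀ
        = Matrix.fromBlocks (PA n A b * (PA n A b)ᵀ) 0 0 (PA n A b * (PA n A b)ᵀ)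
    ∧ (⨅ i, h1.eigenvalues i) = ⨅ i, h2.eigenvalues i := by
  refine ⟨gram_eq n A b, ?_⟩
  have hrange : Set.range h1.eigenvalues = Set.range h2.eigenvalues := by
    rw [← Matrix.IsHermitian.spectrum_real_eq_range_eigenvalues h1,
      ← Matrix.IsHermitian.spectrum_real_eq_range_eigenvalues h2, gram_eq n A b, spectrum_blocks]
  rw [iInf, iInf, hrange]
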